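/- arXiv:2110.13224 — 3 statements merged into one kernel-verified Lean document; each statement's English description precedes it below -/
import Mathlib

section
/- Let J be an invertible 2×2 matrix, Φ̂ : ℝ² → ℝ² a vector field on reference coordinates, and Φ = (1/det J) J (Φ̂ ∘ F⁻¹) its contravariant Piola image under the affine map F with Jacobian J. If e = J ê is an edge with normals n, n̂ as above, then at corresponding points x = F(x̂): ‖e‖ (Φ(x) · n) = ‖ê‖ (Φ̂(x̂) · n̂). -/
open Matrix

/-- Clockwise rotation by 90 degrees. -/
def Rrot : Matrix (Fin 2) (Fin 2) ℝ := !![0, 1; -1, 0]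

/-- Euclidean norm of a vector in ℝ². -/
noncomputable def enorm2 (v : Fin 2 → ℝ) : ℝ := Real.sqrt (v ⬝ᵥ v)

lemma enorm2_pos {v : Fin 2 → ℝ} (hv : v ≠ 0) : 0 < enorm2 v := by
  apply Real.sqrt_pos.2
  have : v ⬝ᵥ v = v 0 * v 0 + v 1 * v 1 := by
    simp [dotProduct, Fin.sum_univ_two]
  rw [this]
  rcases (by by_contra h; push_neg at h; exact hv (funext fun i => by fin_cases i <;> simp [h.1, h.2]) :
    v 0 ≠ 0 ∨ v 1 ≠ 0) with h | h <;>
    nlinarith [mul_self_pos.2 h, mul_self_nonneg (v 0), mul_self_nonneg (v 1)]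

lemma key (J : Matrix (Fin 2) (Fin 2) ℝ) (u v : Fin 2 → ℝ) :
    (J *ᵥ u) ⬝ᵥ (Rrot *ᵥ (J *ᵥ v)) = J.det * (u ⬝ᵥ (Rrot *ᵥ v)) := by
  simp [Rrot, mulVec, dotProduct, Fin.sum_univ_two, Matrix.det_fin_two]
  ring

theorem stmt_3 (J : Matrix (Fin 2) (Fin 2) ℝ) (b : Fin 2 → ℝ)
    (hJ : IsUnit J.det)
    (Phihat Phi : (Fin 2 → ℝ) → (Fin 2 → ℝ))
    (hPiola : ∀ y : Fin 2 → ℝ, Phi (J *ᵥ y + b) = (J.det)⁻¹ • (J *ᵥ Phihat y))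
    (ehat e that t nhat n : Fin 2 → ℝ)
    (hehat : ehat ≠ 0)
    (he : e = J *ᵥ ehat)
    (hthat : that = (enorm2 ehat)⁻¹ • ehat)
    (ht : t = (enorm2 e)⁻¹ • e)
    (hnhat : nhat = Rrot *ᵥ that)
    (hn : n = Rrot *ᵥ t)
    (xhat x : Fin 2 → ℝ)
    (hx : x = J *ᵥ xhat + b) :
    enorm2 e * (Phi x ⬝ᵥ n) = enorm2 ehat * (Phihat xhat ⬝ᵥ nhat) := by
  have hdet : J.det ≠ 0 := hJ.ne_zero
  subst he hx
  have hene : J *ᵥ ehat ≠ 0 := by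
    intro h
    exact hehat ((Matrix.mulVec_injective_iff_isUnit.2 (isUnit_iff_isUnit_det J |>.2 hJ)) (by simp [h]))
  have hE : enorm2 (J *ᵥ ehat) ≠ 0 := (enorm2_pos hene).ne'
  have hEh : enorm2 ehat ≠ 0 := (enorm2_pos hehat).ne'
  rw [hn, ht, hnhat, hthat, Matrix.mulVec_smul, Matrix.mulVec_smul, hPiola,
    dotProduct_smul, smul_dotProduct, dotProduct_smul, key]
  simp only [smul_eq_mul]
  field_simp
end

section
/- With τ = (1/(det J)²) J (τ̂ ∘ F⁻¹) Jᵀ the double contravariant Piola image of a symmetric matrix field τ̂, and e = J ê with normal n and tangent t, one has ‖e‖² nᵀ τ(x) t = (‖ê‖²/det J) n̂ᵀ τ̂(x̂) (Jᵀ J) t̂ at corresponding points. -/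
open Matrix

lemma dot_self_nonneg (v : Fin 2 → ℝ) : 0 ≤ v ⬝ᵥ v :=
  Finset.sum_nonneg fun i _ => mul_self_nonneg _

lemma enorm2_sq (v : Fin 2 → ℝ) : enorm2 v ^ 2 = v ⬝ᵥ v :=
  Real.sq_sqrt (dot_self_nonneg v)

lemma enorm2_ne_zero {v : Fin 2 → ℝ} (hv : v ≠ 0) : enorm2 v ≠ 0 := by
  intro h
  apply hv
  have h2 : enorm2 v ^ 2 = 0 := by rw [h]; ring
  rw [enorm2_sq] at h2
  exact dotProduct_self_eq_zero.mp h2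

theorem stmt_7 (J : Matrix (Fin 2) (Fin 2) ℝ) (b : Fin 2 → ℝ)
    (hJ : IsUnit J.det)
    (tauhat tau : (Fin 2 → ℝ) → Matrix (Fin 2) (Fin 2) ℝ)
    (hsym : ∀ y, (tauhat y)ᵀ = tauhat y)
    (hPiola : ∀ y : Fin 2 → ℝ,
      tau (J *ᵥ y + b) = ((J.det) ^ 2)⁻¹ • (J * tauhat y * Jᵀ))
    (ehat e that t nhat n : Fin 2 → ℝ)
    (hehat : ehat ≠ 0)
    (he : e = J *ᵥ ehat)
    (hthat : that = (enorm2 ehat)⁻¹ • ehat)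
    (ht : t = (enorm2 e)⁻¹ • e)
    (hnhat : nhat = Rrot *ᵥ that)
    (hn : n = Rrot *ᵥ t)
    (xhat x : Fin 2 → ℝ)
    (hx : x = J *ᵥ xhat + b) :
    enorm2 e ^ 2 * (n ⬝ᵥ (tau x *ᵥ t)) =
      (enorm2 ehat ^ 2 / J.det) * (nhat ⬝ᵥ ((tauhat xhat * (Jᵀ * J)) *ᵥ that)) := by
  have hdet : J.det ≠ 0 := hJ.ne_zero
  have he0 : e ≠ 0 := by
    rw [he]
    intro h
    exact hehat (mulVec_injective_iff_isUnit.mpr ((Matrix.isUnit_iff_isUnit_det J).mpr hJ)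
      (h.trans (Matrix.mulVec_zero J).symm))
  have hne : enorm2 e ≠ 0 := enorm2_ne_zero he0
  have hnehat : enorm2 ehat ≠ 0 := enorm2_ne_zero hehat
  have hesq := enorm2_sq e
  have hehatsq := enorm2_sq ehat
  subst hx hn hnhat ht hthat
  rw [hPiola xhat]
  rw [he] at *
  set M := tauhat xhat with hM
  have hdetJ : J.det = J 0 0 * J 1 1 - J 0 1 * J 1 0 := Matrix.det_fin_two J
  simp only [Matrix.mulVec, dotProduct, Fin.sum_univ_two, Matrix.smul_apply,
    Matrix.mul_apply, Pi.smul_apply, smul_eq_mul, Rrot, Matrix.cons_val', Matrix.cons_val_zero,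
    Matrix.cons_val_one, Matrix.head_cons, Matrix.head_fin_const, Matrix.empty_val',
    Matrix.cons_val_fin_one, Matrix.transpose_apply, Matrix.of_apply] at *
  field_simp
  rw [hdetJ]
  ring_nf
end

section
/- Let φ̂ : ℝ² → ℝ be twice continuously differentiable, F(x̂) = J x̂ + b affine with invertible J, and φ = φ̂ ∘ F⁻¹. Define the Airy operator airy ψ = [[∂²ψ/∂y², -∂²ψ/∂x∂y],[-∂²ψ/∂x∂y, ∂²ψ/∂x²]]. Then airy φ = (1/(det J)²) J ((airy φ̂) ∘ F⁻¹) Jᵀ, i.e. the Airy stress of the pullback equals the double contravariant Piola image of the reference Airy stress. -/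
open Matrix

/-- Partial derivative in coordinate direction `i` of a scalar field on ℝ². -/
noncomputable def pd (i : Fin 2) (f : (Fin 2 → ℝ) → ℝ) (x : Fin 2 → ℝ) : ℝ :=
  fderiv ℝ f x (Pi.single i 1)

/-- The Airy stress of a scalar field: [[ψ_yy, -ψ_xy],[-ψ_xy, ψ_xx]]. -/
noncomputable def airy (ψ : (Fin 2 → ℝ) → ℝ) (x : Fin 2 → ℝ) :
    Matrix (Fin 2) (Fin 2) ℝ :=
  !![pd 1 (pd 1 ψ) x, -(pd 0 (pd 1 ψ) x);
     -(pd 0 (pd 1 ψ) x), pd 0 (pd 0 ψ) x]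

lemma vec_decomp (v : Fin 2 → ℝ) :
    v = v 0 • (Pi.single 0 1 : Fin 2 → ℝ) + v 1 • (Pi.single 1 1 : Fin 2 → ℝ) := by
  funext k; fin_cases k <;> simp [Pi.single_apply]

lemma clm_apply_decomp (T : (Fin 2 → ℝ) →L[ℝ] ℝ) (v : Fin 2 → ℝ) :
    T v = v 0 * T (Pi.single 0 1) + v 1 * T (Pi.single 1 1) := by
  conv_lhs => rw [vec_decomp v]
  simp

lemma contDiff_pd (f : (Fin 2 → ℝ) → ℝ) (hf : ContDiff ℝ 2 f) (k : Fin 2) :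
    ContDiff ℝ 1 (pd k f) := by
  have h1 : ContDiff ℝ 1 (fderiv ℝ f) := hf.fderiv_right (by norm_num)
  exact (ContinuousLinearMap.apply ℝ ℝ (Pi.single k 1 : Fin 2 → ℝ)).contDiff.comp h1

lemma pd_symm (f : (Fin 2 → ℝ) → ℝ) (hf : ContDiff ℝ 2 f) (x : Fin 2 → ℝ) :
    pd 0 (pd 1 f) x = pd 1 (pd 0 f) x := by
  have hd : Differentiable ℝ f := hf.differentiable (by norm_num)
  have h1 : ContDiff ℝ 1 (fderiv ℝ f) := hf.fderiv_right (by norm_num)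
  have hdd : DifferentiableAt ℝ (fderiv ℝ f) x := (h1.differentiable (by norm_num)) x
  have hsym := second_derivative_symmetric (f' := fderiv ℝ f)
    (fun y => (hd y).hasFDerivAt) hdd.hasFDerivAt
  have key : ∀ i j : Fin 2, pd i (pd j f) x =
      (fderiv ℝ (fderiv ℝ f) x (Pi.single i 1)) (Pi.single j 1) := by
    intro i j
    rw [show pd i (pd j f) x = fderiv ℝ (fun y => (fderiv ℝ f y) (Pi.single j 1)) x (Pi.single i 1) from rfl]
    rw [fderiv_clm_apply hdd (differentiableAt_const _)]
    simp
  rw [key 0 1, key 1 0, hsym]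

noncomputable def mvL (A : Matrix (Fin 2) (Fin 2) ℝ) : (Fin 2 → ℝ) →L[ℝ] (Fin 2 → ℝ) :=
  LinearMap.toContinuousLinearMap A.mulVecLin

lemma hasFDeriv_aff (A : Matrix (Fin 2) (Fin 2) ℝ) (b : Fin 2 → ℝ) (x : Fin 2 → ℝ) :
    HasFDerivAt (fun x => A *ᵥ (x - b)) (mvL A) x := by
  have : (fun x : Fin 2 → ℝ => A *ᵥ (x - b)) = fun x => mvL A x - A *ᵥ b := by
    funext y; simp [mvL, Matrix.mulVec_sub]
  rw [this]
  exact ((mvL A).hasFDerivAt).sub_const _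

lemma pd_comp (f : (Fin 2 → ℝ) → ℝ) (hf : Differentiable ℝ f)
    (A : Matrix (Fin 2) (Fin 2) ℝ) (b : Fin 2 → ℝ) (i : Fin 2) (x : Fin 2 → ℝ) :
    pd i (fun x => f (A *ᵥ (x - b))) x =
      A 0 i * pd 0 f (A *ᵥ (x - b)) + A 1 i * pd 1 f (A *ᵥ (x - b)) := by
  have hc : HasFDerivAt (fun x => f (A *ᵥ (x - b)))
      ((fderiv ℝ f (A *ᵥ (x - b))).comp (mvL A)) x :=
    (hf (A *ᵥ (x - b))).hasFDerivAt.comp x (hasFDeriv_aff A b x)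
  have : pd i (fun x => f (A *ᵥ (x - b))) x =
      (fderiv ℝ f (A *ᵥ (x - b))) (mvL A (Pi.single i 1)) := by
    unfold pd; rw [hc.fderiv]; rfl
  rw [this]
  have hmv : mvL A (Pi.single i 1) = A *ᵥ Pi.single i 1 := rfl
  rw [hmv, clm_apply_decomp]
  simp [Matrix.mulVec_single, pd]

lemma pd_lin (g h : (Fin 2 → ℝ) → ℝ) (hg : Differentiable ℝ g) (hh : Differentiable ℝ h)
    (a c : ℝ) (m : Fin 2) (y : Fin 2 → ℝ) :
    pd m (fun z => a * g z + c * h z) y = a * pd m g y + c * pd m h y := by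
  unfold pd
  rw [fderiv_fun_add ((hg y).const_mul a) ((hh y).const_mul c), fderiv_const_mul (hg y),
    fderiv_const_mul (hh y)]
  simp

lemma pd2_comp (f : (Fin 2 → ℝ) → ℝ) (hf : ContDiff ℝ 2 f)
    (A : Matrix (Fin 2) (Fin 2) ℝ) (b : Fin 2 → ℝ) (i j : Fin 2) (x : Fin 2 → ℝ) :
    pd j (pd i (fun x => f (A *ᵥ (x - b)))) x =
      A 0 i * (A 0 j * pd 0 (pd 0 f) (A *ᵥ (x - b)) + A 1 j * pd 1 (pd 0 f) (A *ᵥ (x - b)))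
      + A 1 i * (A 0 j * pd 0 (pd 1 f) (A *ᵥ (x - b)) + A 1 j * pd 1 (pd 1 f) (A *ᵥ (x - b))) := by
  have hd : Differentiable ℝ f := hf.differentiable (by norm_num)
  have hp0 : Differentiable ℝ (pd 0 f) := (contDiff_pd f hf 0).differentiable (by norm_num)
  have hp1 : Differentiable ℝ (pd 1 f) := (contDiff_pd f hf 1).differentiable (by norm_num)
  have h1 : pd i (fun x => f (A *ᵥ (x - b))) =
      fun x => A 0 i * pd 0 f (A *ᵥ (x - b)) + A 1 i * pd 1 f (A *ᵥ (x - b)) := by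
    funext z; exact pd_comp f hd A b i z
  rw [h1]
  have h2 : (fun x => A 0 i * pd 0 f (A *ᵥ (x - b)) + A 1 i * pd 1 f (A *ᵥ (x - b))) =
      fun x => (fun y => A 0 i * pd 0 f y + A 1 i * pd 1 f y) (A *ᵥ (x - b)) := rfl
  rw [h2, pd_comp _ ((hp0.const_mul _).fun_add (hp1.const_mul _)) A b j x]
  rw [pd_lin _ _ hp0 hp1, pd_lin _ _ hp0 hp1]
  ring

theorem stmt_14 (J : Matrix (Fin 2) (Fin 2) ℝ) (b : Fin 2 → ℝ)
    (hJ : IsUnit J.det)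
    (φhat : (Fin 2 → ℝ) → ℝ)
    (hreg : ContDiff ℝ 2 φhat)
    (φ : (Fin 2 → ℝ) → ℝ)
    (hφ : ∀ x, φ x = φhat (J⁻¹ *ᵥ (x - b))) :
    ∀ x, airy φ x = ((J.det) ^ 2)⁻¹ • (J * airy φhat (J⁻¹ *ᵥ (x - b)) * Jᵀ) := by
  have hφ' : φ = fun x => φhat (J⁻¹ *ᵥ (x - b)) := funext hφ
  subst hφ'
  intro x
  have hdet : J.det ≠ 0 := by
    intro h; rw [h] at hJ; exact (by simp : ¬ IsUnit (0:ℝ)) hJ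
  have hA : J⁻¹ = (J.det)⁻¹ • !![J 1 1, -J 0 1; -J 1 0, J 0 0] := by
    rw [Matrix.inv_def, Matrix.adjugate_fin_two, Ring.inverse_eq_inv']
  have a00 : J⁻¹ 0 0 = (J.det)⁻¹ * J 1 1 := by rw [hA]; simp
  have a01 : J⁻¹ 0 1 = (J.det)⁻¹ * (-J 0 1) := by rw [hA]; simp
  have a10 : J⁻¹ 1 0 = (J.det)⁻¹ * (-J 1 0) := by rw [hA]; simp
  have a11 : J⁻¹ 1 1 = (J.det)⁻¹ * J 0 0 := by rw [hA]; simp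
  have hsym := pd_symm φhat hreg (J⁻¹ *ᵥ (x - b))
  have E := pd2_comp φhat hreg J⁻¹ b
  simp only [airy, E]
  generalize J⁻¹ *ᵥ (x - b) = y at hsym ⊢
  ext i j
  fin_cases i <;> fin_cases j <;>
    simp [airy, Matrix.mul_apply, Fin.sum_univ_two] <;>
    simp only [E, a00, a01, a10, a11, hsym] <;>
    ring
end
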